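/- arXiv:2312.00956 — 3 statements merged into one kernel-verified Lean document; each statement's English description precedes it below -/
import Mathlib

section
/- For matrices A, B in C^{n×n}, the singular angle satisfies the triangle inequality θ(AB) ≤ θ(A) + θ(B). -/
open scoped Matrix

noncomputable def evnorm {n : ℕ} (x : Fin n → ℂ) : ℝ :=
  Real.sqrt ((star x ⬝ᵥ x).re)

noncomputable def qform {n : ℕ} (A : Matrix (Fin n) (Fin n) ℂ) (x : Fin n → ℂ) : ℂ :=
  star x ⬝ᵥ A.mulVec x

noncomputable def nnr {n : ℕ} (A : Matrix (Fin n) (Fin n) ℂ) : Set ℂ :=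
  {z | ∃ x : Fin n → ℂ, x ≠ 0 ∧ A.mulVec x ≠ 0 ∧
    z = qform A x / ((evnorm x * evnorm (A.mulVec x) : ℝ) : ℂ)}

noncomputable def singAngle {n : ℕ} (A : Matrix (Fin n) (Fin n) ℂ) : ℝ :=
  sSup {θ : ℝ | ∃ x : Fin n → ℂ, x ≠ 0 ∧ A.mulVec x ≠ 0 ∧
    θ = Real.arccos ((qform A x).re / (evnorm x * evnorm (A.mulVec x)))}

noncomputable def revProd {n m : ℕ} (A : Fin m → Matrix (Fin n) (Fin n) ℂ) :
    Matrix (Fin n) (Fin n) ℂ :=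
  (List.ofFn A).reverse.prod
open InnerProductGeometry Real
open scoped RealInnerProductSpace

lemma core_tri {V : Type*} [NormedAddCommGroup V] [InnerProductSpace ℝ V]
    {x y z : V} (hx : ‖x‖ = 1) (hy : ‖y‖ = 1) (hz : ‖z‖ = 1) :
    angle x z ≤ angle x y + angle y z := by
  by_cases hπ : π ≤ angle x y + angle y z
  · exact le_trans (angle_le_pi x z) hπ
  push_neg at hπ
  have hca : Real.cos (angle x y) = ⟪x, y⟫ := by rw [cos_angle, hx, hy]; simp
  have hcb : Real.cos (angle y z) = ⟪y, z⟫ := by rw [cos_angle, hy, hz]; simp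
  have hyy : ⟪y, y⟫ = 1 := by rw [real_inner_self_eq_norm_mul_norm, hy]; ring
  have hxxs : ⟪x, x⟫ = 1 := by rw [real_inner_self_eq_norm_mul_norm, hx]; ring
  have hzzs : ⟪z, z⟫ = 1 := by rw [real_inner_self_eq_norm_mul_norm, hz]; ring
  have hxz' : ⟪x - ⟪x, y⟫ • y, z - ⟪y, z⟫ • y⟫ = ⟪x, z⟫ - ⟪x, y⟫ * ⟪y, z⟫ := by
    simp only [inner_sub_left, inner_sub_right, real_inner_smul_left,
      real_inner_smul_right, hyy, real_inner_comm y x]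
    ring
  have hxx' : ⟪x - ⟪x, y⟫ • y, x - ⟪x, y⟫ • y⟫ = 1 - ⟪x, y⟫ ^ 2 := by
    simp only [inner_sub_left, inner_sub_right, real_inner_smul_left,
      real_inner_smul_right, hyy, hxxs, real_inner_comm y x]
    ring
  have hzz' : ⟪z - ⟪y, z⟫ • y, z - ⟪y, z⟫ • y⟫ = 1 - ⟪y, z⟫ ^ 2 := by
    simp only [inner_sub_left, inner_sub_right, real_inner_smul_left,
      real_inner_smul_right, hyy, hzzs, real_inner_comm y z]
    ring
  have hnx' : ‖x - ⟪x, y⟫ • y‖ = Real.sqrt (1 - ⟪x, y⟫ ^ 2) := by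
    rw [← hxx', real_inner_self_eq_norm_mul_norm, Real.sqrt_mul_self (norm_nonneg _)]
  have hnz' : ‖z - ⟪y, z⟫ • y‖ = Real.sqrt (1 - ⟪y, z⟫ ^ 2) := by
    rw [← hzz', real_inner_self_eq_norm_mul_norm, Real.sqrt_mul_self (norm_nonneg _)]
  have hCS : -(‖x - ⟪x, y⟫ • y‖ * ‖z - ⟪y, z⟫ • y‖) ≤ ⟪x - ⟪x, y⟫ • y, z - ⟪y, z⟫ • y⟫ := by
    have h1 := abs_real_inner_le_norm (x - ⟪x, y⟫ • y) (z - ⟪y, z⟫ • y)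
    have h2 := neg_abs_le ⟪x - ⟪x, y⟫ • y, z - ⟪y, z⟫ • y⟫
    linarith
  have hsa : Real.sin (angle x y) = Real.sqrt (1 - ⟪x, y⟫ ^ 2) := by
    rw [Real.sin_eq_sqrt_one_sub_cos_sq (angle_nonneg _ _) (angle_le_pi _ _), hca]
  have hsb : Real.sin (angle y z) = Real.sqrt (1 - ⟪y, z⟫ ^ 2) := by
    rw [Real.sin_eq_sqrt_one_sub_cos_sq (angle_nonneg _ _) (angle_le_pi _ _), hcb]
  have hkey : Real.cos (angle x y + angle y z) ≤ Real.cos (angle x z) := by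
    rw [Real.cos_add, hca, hcb, hsa, hsb, cos_angle, hx, hz]
    rw [← hnx', ← hnz']
    simp only [mul_one, div_one]
    have : ⟪x, z⟫ = ⟪x - ⟪x, y⟫ • y, z - ⟪y, z⟫ • y⟫ + ⟪x, y⟫ * ⟪y, z⟫ := by
      rw [hxz']; ring
    rw [this]
    linarith
  by_contra hcon
  push_neg at hcon
  have h2 : Real.cos (angle x z) < Real.cos (angle x y + angle y z) :=
    Real.strictAntiOn_cos ⟨add_nonneg (angle_nonneg _ _) (angle_nonneg _ _), le_of_lt hπ⟩
      ⟨angle_nonneg _ _, angle_le_pi _ _⟩ hcon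
  linarith

lemma angle_triangle' {V : Type*} [NormedAddCommGroup V] [InnerProductSpace ℝ V]
    (x y z : V) : angle x z ≤ angle x y + angle y z := by
  rcases eq_or_ne y 0 with rfl | hy
  · rw [angle_zero_left, angle_zero_right]
    linarith [angle_le_pi x z]
  rcases eq_or_ne x 0 with rfl | hx
  · rw [angle_zero_left, angle_zero_left]
    linarith [angle_nonneg y z]
  rcases eq_or_ne z 0 with rfl | hz
  · rw [angle_zero_right, angle_zero_right]
    linarith [angle_nonneg x y]
  have hx1 := norm_smul_inv_norm (𝕜 := ℝ) hx
  have hy1 := norm_smul_inv_norm (𝕜 := ℝ) hy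
  have hz1 := norm_smul_inv_norm (𝕜 := ℝ) hz
  have e1 : angle x z = angle (‖x‖⁻¹ • x) (‖z‖⁻¹ • z) := by
    rw [angle_smul_left_of_pos _ _ (inv_pos.2 (norm_pos_iff.2 hx)),
      angle_smul_right_of_pos _ _ (inv_pos.2 (norm_pos_iff.2 hz))]
  have e2 : angle x y = angle (‖x‖⁻¹ • x) (‖y‖⁻¹ • y) := by
    rw [angle_smul_left_of_pos _ _ (inv_pos.2 (norm_pos_iff.2 hx)),
      angle_smul_right_of_pos _ _ (inv_pos.2 (norm_pos_iff.2 hy))]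
  have e3 : angle y z = angle (‖y‖⁻¹ • y) (‖z‖⁻¹ • z) := by
    rw [angle_smul_left_of_pos _ _ (inv_pos.2 (norm_pos_iff.2 hy)),
      angle_smul_right_of_pos _ _ (inv_pos.2 (norm_pos_iff.2 hz))]
  rw [e1, e2, e3]
  exact core_tri hx1 hy1 hz1
section SingAngleProof

open InnerProductGeometry Real
open scoped RealInnerProductSpace

attribute [local instance] InnerProductSpace.rclikeToReal

private lemma arccos_eq_angle {n : ℕ} (u v : Fin n → ℂ) :
    Real.arccos ((star u ⬝ᵥ v).re / (evnorm u * evnorm v)) =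
      InnerProductGeometry.angle
        ((WithLp.equiv 2 (Fin n → ℂ)).symm u : EuclideanSpace ℂ (Fin n))
        ((WithLp.equiv 2 (Fin n → ℂ)).symm v) := by
  have hin : (inner ℝ ((WithLp.equiv 2 (Fin n → ℂ)).symm u : EuclideanSpace ℂ (Fin n))
      ((WithLp.equiv 2 (Fin n → ℂ)).symm v) : ℝ) = (star u ⬝ᵥ v).re := by
    change Complex.re (inner ℂ (WithLp.toLp 2 u : EuclideanSpace ℂ (Fin n)) (WithLp.toLp 2 v)) = _
    rw [EuclideanSpace.inner_toLp_toLp, dotProduct_comm]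
  have hnu : ‖((WithLp.equiv 2 (Fin n → ℂ)).symm u : EuclideanSpace ℂ (Fin n))‖ = evnorm u := by
    rw [@norm_eq_sqrt_re_inner ℂ, WithLp.equiv_symm_apply, EuclideanSpace.inner_toLp_toLp,
      dotProduct_comm]
    rfl
  have hnv : ‖((WithLp.equiv 2 (Fin n → ℂ)).symm v : EuclideanSpace ℂ (Fin n))‖ = evnorm v := by
    rw [@norm_eq_sqrt_re_inner ℂ, WithLp.equiv_symm_apply, EuclideanSpace.inner_toLp_toLp,
      dotProduct_comm]
    rfl
  rw [InnerProductGeometry.angle, hin, hnu, hnv]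

private lemma singAngle_bddAbove {n : ℕ} (M : Matrix (Fin n) (Fin n) ℂ) :
    BddAbove {θ : ℝ | ∃ x : Fin n → ℂ, x ≠ 0 ∧ M.mulVec x ≠ 0 ∧
      θ = Real.arccos ((qform M x).re / (evnorm x * evnorm (M.mulVec x)))} := by
  refine ⟨π, ?_⟩
  rintro θ ⟨x, -, -, rfl⟩
  exact Real.arccos_le_pi _

private lemma le_singAngle {n : ℕ} (M : Matrix (Fin n) (Fin n) ℂ) {x : Fin n → ℂ}
    (hx : x ≠ 0) (hMx : M.mulVec x ≠ 0) :
    Real.arccos ((qform M x).re / (evnorm x * evnorm (M.mulVec x))) ≤ singAngle M :=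
  le_csSup (singAngle_bddAbove M) ⟨x, hx, hMx, rfl⟩

private lemma singAngle_nonneg {n : ℕ} (M : Matrix (Fin n) (Fin n) ℂ) :
    0 ≤ singAngle M := by
  by_cases h : ∃ x : Fin n → ℂ, x ≠ 0 ∧ M.mulVec x ≠ 0
  · obtain ⟨x, hx, hMx⟩ := h
    exact le_trans (Real.arccos_nonneg _) (le_singAngle M hx hMx)
  · have : {θ : ℝ | ∃ x : Fin n → ℂ, x ≠ 0 ∧ M.mulVec x ≠ 0 ∧
        θ = Real.arccos ((qform M x).re / (evnorm x * evnorm (M.mulVec x)))} = ∅ := by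
      ext θ
      simp only [Set.mem_setOf_eq, Set.mem_empty_iff_false, iff_false]
      rintro ⟨x, hx, hMx, -⟩
      exact h ⟨x, hx, hMx⟩
    rw [singAngle, this, Real.sSup_empty]

theorem stmt6 {n : ℕ} (A B : Matrix (Fin n) (Fin n) ℂ) :
    singAngle (A * B) ≤ singAngle A + singAngle B := by
  apply Real.sSup_le
  · rintro θ ⟨x, hx, hABx, rfl⟩
    have hBx : B.mulVec x ≠ 0 := by
      intro h
      apply hABx
      rw [← Matrix.mulVec_mulVec, h, Matrix.mulVec_zero]
    have hABx' : A.mulVec (B.mulVec x) ≠ 0 := by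
      rwa [Matrix.mulVec_mulVec]
    have key := angle_triangle'
      ((WithLp.equiv 2 (Fin n → ℂ)).symm x : EuclideanSpace ℂ (Fin n))
      ((WithLp.equiv 2 (Fin n → ℂ)).symm (B.mulVec x))
      ((WithLp.equiv 2 (Fin n → ℂ)).symm ((A * B).mulVec x))
    have e0 : Real.arccos ((qform (A * B) x).re / (evnorm x * evnorm ((A * B).mulVec x))) =
        InnerProductGeometry.angle
          ((WithLp.equiv 2 (Fin n → ℂ)).symm x : EuclideanSpace ℂ (Fin n))
          ((WithLp.equiv 2 (Fin n → ℂ)).symm ((A * B).mulVec x)) := arccos_eq_angle _ _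
    have e1 : InnerProductGeometry.angle
          ((WithLp.equiv 2 (Fin n → ℂ)).symm x : EuclideanSpace ℂ (Fin n))
          ((WithLp.equiv 2 (Fin n → ℂ)).symm (B.mulVec x)) =
        Real.arccos ((qform B x).re / (evnorm x * evnorm (B.mulVec x))) :=
      (arccos_eq_angle _ _).symm
    have e2 : InnerProductGeometry.angle
          ((WithLp.equiv 2 (Fin n → ℂ)).symm (B.mulVec x) : EuclideanSpace ℂ (Fin n))
          ((WithLp.equiv 2 (Fin n → ℂ)).symm ((A * B).mulVec x)) =
        Real.arccos ((qform A (B.mulVec x)).re /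
          (evnorm (B.mulVec x) * evnorm (A.mulVec (B.mulVec x)))) := by
      rw [← Matrix.mulVec_mulVec (v := x) (M := A) (N := B)]
      exact (arccos_eq_angle _ _).symm
    rw [e0]
    rw [e1, e2] at key
    refine le_trans key ?_
    rw [add_comm]
    exact add_le_add (le_singAngle A hBx hABx') (le_singAngle B hx hBx)
  · exact add_nonneg (singAngle_nonneg A) (singAngle_nonneg B)

end SingAngleProof
end

section
/- Let A₁, …, A_m ∈ C^{n×n} and suppose there exist γ₁, …, γ_m ∈ [−π, π) such that for each k, θ(e^{−iγ_k} A_k) =: r_k satisfies Σ_{k=1}^m (γ_k + r_k) < π and Σ_{k=1}^m (γ_k − r_k) > −π. Then for every nonzero eigenvalue λ of A_m A_{m−1} ⋯ A₁, there exists a choice of argument φ of λ (i.e., λ = |λ| e^{iφ}) with Σ_{k=1}^m (γ_k − r_k) ≤ φ ≤ Σ_{k=1}^m (γ_k + r_k). -/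
open scoped Matrix

/-! ### Triangle inequality for the unoriented angle -/

open InnerProductGeometry

section Tri

variable {V : Type*} [NormedAddCommGroup V] [InnerProductSpace ℝ V]

local notation "⟪" x ", " y "⟫" => @inner ℝ V _ x y

lemma cos_add_angle_le_inner (x y z : V) (hx : ‖x‖ = 1) (hy : ‖y‖ = 1) (hz : ‖z‖ = 1) :
    Real.cos (angle x y + angle y z) ≤ ⟪x, z⟫ := by
  have cxy : Real.cos (angle x y) = ⟪x, y⟫ := by rw [cos_angle, hx, hy]; simp
  have cyz : Real.cos (angle y z) = ⟪y, z⟫ := by rw [cos_angle, hy, hz]; simp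
  set u := x - ⟪x, y⟫ • y with hu
  set v := z - ⟪y, z⟫ • y with hv
  have hyy : ⟪y, y⟫ = 1 := by
    rw [real_inner_self_eq_norm_sq, hy]; norm_num
  have huv : ⟪u, v⟫ = ⟪x, z⟫ - ⟪x, y⟫ * ⟪y, z⟫ := by
    simp only [hu, hv, inner_sub_left, inner_sub_right, real_inner_smul_left,
      real_inner_smul_right, hyy]
    rw [real_inner_comm y x]
    ring
  have hu2 : ⟪u, u⟫ = 1 - ⟪x, y⟫ ^ 2 := by
    simp only [hu, inner_sub_left, inner_sub_right, real_inner_smul_left,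
      real_inner_smul_right, hyy]
    rw [real_inner_comm y x, real_inner_self_eq_norm_sq, hx]
    ring
  have hv2 : ⟪v, v⟫ = 1 - ⟪y, z⟫ ^ 2 := by
    simp only [hv, inner_sub_left, inner_sub_right, real_inner_smul_left,
      real_inner_smul_right, hyy]
    rw [real_inner_comm y z, real_inner_self_eq_norm_sq, hz]
    ring
  have hnu : ‖u‖ = Real.sqrt (1 - ⟪x, y⟫ ^ 2) := by
    rw [← hu2, real_inner_self_eq_norm_sq]
    rw [Real.sqrt_sq (norm_nonneg _)]
  have hnv : ‖v‖ = Real.sqrt (1 - ⟪y, z⟫ ^ 2) := by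
    rw [← hv2, real_inner_self_eq_norm_sq]
    rw [Real.sqrt_sq (norm_nonneg _)]
  have hsxy : Real.sin (angle x y) = Real.sqrt (1 - ⟪x, y⟫ ^ 2) := by
    have := Real.sin_arccos (x := ⟪x, y⟫ / (‖x‖ * ‖y‖))
    rw [angle]
    rw [this, hx, hy]
    norm_num
  have hsyz : Real.sin (angle y z) = Real.sqrt (1 - ⟪y, z⟫ ^ 2) := by
    have := Real.sin_arccos (x := ⟪y, z⟫ / (‖y‖ * ‖z‖))
    rw [angle, this, hy, hz]
    norm_num
  have hcs : ⟪u, v⟫ ≥ -(‖u‖ * ‖v‖) := by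
    have := abs_real_inner_le_norm u v
    cases abs_le.mp this with
    | intro h1 h2 => linarith
  rw [Real.cos_add, cxy, cyz, hsxy, hsyz]
  rw [← hnu, ← hnv]
  linarith [huv, hcs]

lemma angle_triangle_aux (x y z : V) (hx : ‖x‖ = 1) (hy : ‖y‖ = 1) (hz : ‖z‖ = 1) :
    angle x z ≤ angle x y + angle y z := by
  rcases le_or_gt Real.pi (angle x y + angle y z) with h | h
  · exact (angle_le_pi x z).trans h
  · by_contra hlt
    push_neg at hlt
    have h1 : angle x y + angle y z ∈ Set.Icc 0 Real.pi :=
      ⟨add_nonneg (angle_nonneg _ _) (angle_nonneg _ _), h.le⟩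
    have h2 : angle x z ∈ Set.Icc 0 Real.pi := ⟨angle_nonneg _ _, angle_le_pi _ _⟩
    have hcc := Real.strictAntiOn_cos h1 h2 hlt
    have hc1 := cos_add_angle_le_inner x y z hx hy hz
    have hc2 : Real.cos (angle x z) = ⟪x, z⟫ := by rw [cos_angle, hx, hz]; simp
    linarith

lemma angle_triangle_ne (x y z : V) (hx : x ≠ 0) (hy : y ≠ 0) (hz : z ≠ 0) :
    angle x z ≤ angle x y + angle y z := by
  have nx : (0:ℝ) < ‖x‖⁻¹ := inv_pos.mpr (norm_pos_iff.mpr hx)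
  have ny : (0:ℝ) < ‖y‖⁻¹ := inv_pos.mpr (norm_pos_iff.mpr hy)
  have nz : (0:ℝ) < ‖z‖⁻¹ := inv_pos.mpr (norm_pos_iff.mpr hz)
  have h := angle_triangle_aux (‖x‖⁻¹ • x) (‖y‖⁻¹ • y) (‖z‖⁻¹ • z)
    (norm_smul_inv_norm hx) (norm_smul_inv_norm hy) (norm_smul_inv_norm hz)
  rwa [angle_smul_left_of_pos _ _ nx, angle_smul_left_of_pos _ _ nx,
    angle_smul_right_of_pos _ _ nz, angle_smul_right_of_pos _ _ ny,
    angle_smul_left_of_pos _ _ ny, angle_smul_right_of_pos _ _ nz] at h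

end Tri

/-! ### Bridge to `EuclideanSpace` -/

noncomputable def toE {n : ℕ} (x : Fin n → ℂ) : EuclideanSpace ℂ (Fin n) :=
  (WithLp.equiv 2 _).symm x

lemma toE_inner_re {n : ℕ} (a b : Fin n → ℂ) :
    inner ℝ (toE a) (toE b) = (star a ⬝ᵥ b).re := by
  simp [toE, PiLp.inner_apply, Complex.inner, dotProduct, Complex.re_sum]
  exact Finset.sum_congr rfl fun i _ => by ring

lemma toE_norm {n : ℕ} (a : Fin n → ℂ) : ‖toE a‖ = evnorm a := by
  have h := toE_inner_re a a
  rw [real_inner_self_eq_norm_mul_norm] at h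
  rw [evnorm, ← h, Real.sqrt_mul_self (norm_nonneg _)]

lemma toE_ne_zero {n : ℕ} {a : Fin n → ℂ} (ha : a ≠ 0) : toE a ≠ 0 := by
  intro h
  apply ha
  have := congrArg (WithLp.equiv 2 (Fin n → ℂ)) h
  simpa [toE] using this

lemma toE_smul {n : ℕ} (c : ℂ) (a : Fin n → ℂ) : toE (c • a) = c • toE a :=
  rfl

lemma angle_toE {n : ℕ} (a b : Fin n → ℂ) :
    angle (toE a) (toE b) = Real.arccos ((star a ⬝ᵥ b).re / (evnorm a * evnorm b)) := by
  unfold angle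
  rw [toE_inner_re, toE_norm, toE_norm]

lemma evnorm_smul {n : ℕ} (c : ℂ) (a : Fin n → ℂ) :
    evnorm (c • a) = ‖c‖ * evnorm a := by
  rw [← toE_norm, ← toE_norm, toE_smul, norm_smul]

lemma evnorm_smul_unit {n : ℕ} {c : ℂ} (hc : ‖c‖ = 1) (a : Fin n → ℂ) :
    evnorm (c • a) = evnorm a := by
  rw [evnorm_smul, hc, one_mul]

theorem stmt9 {n m : ℕ} (Ak : Fin m → Matrix (Fin n) (Fin n) ℂ) (γ : Fin m → ℝ)
    (hγ : ∀ k, γ k ∈ Set.Ico (-Real.pi) Real.pi)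
    (h1 : (∑ k, (γ k + singAngle (Complex.exp (-(γ k : ℂ) * Complex.I) • Ak k))) < Real.pi)
    (h2 : (∑ k, (γ k - singAngle (Complex.exp (-(γ k : ℂ) * Complex.I) • Ak k))) > -Real.pi) :
    ∀ μ ∈ spectrum ℂ (revProd Ak), μ ≠ 0 →
      ∃ φ : ℝ, μ = (‖μ‖ : ℝ) * Complex.exp (φ * Complex.I) ∧
        (∑ k, (γ k - singAngle (Complex.exp (-(γ k : ℂ) * Complex.I) • Ak k))) ≤ φ ∧
        φ ≤ (∑ k, (γ k + singAngle (Complex.exp (-(γ k : ℂ) * Complex.I) • Ak k))) := by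
  classical
  intro μ hμ hμ0
  set P := revProd Ak with hPdef
  -- eigenvector
  have hdet : (μ • (1 : Matrix (Fin n) (Fin n) ℂ) - P).det = 0 := by
    by_contra hd
    apply spectrum.mem_iff.mp hμ
    have : IsUnit (μ • (1 : Matrix (Fin n) (Fin n) ℂ) - P) :=
      (Matrix.isUnit_iff_isUnit_det _).mpr (isUnit_iff_ne_zero.mpr hd)
    convert this using 2
    simp [Algebra.algebraMap_eq_smul_one]
  obtain ⟨v, hv0, hv⟩ := Matrix.exists_mulVec_eq_zero_iff.mpr hdet
  have hPv : P.mulVec v = μ • v := by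
    have h := hv
    rw [Matrix.sub_mulVec, Matrix.smul_mulVec, Matrix.one_mulVec, sub_eq_zero] at h
    exact h.symm
  -- the chain of vectors
  set x : ℕ → (Fin n → ℂ) := fun j => (((List.ofFn Ak).take j).reverse.prod).mulVec v
    with hxdef
  have hx0 : x 0 = v := by simp [hxdef, Matrix.one_mulVec]
  have hstep : ∀ j, ∀ h : j < m, x (j + 1) = (Ak ⟨j, h⟩).mulVec (x j) := by
    intro j h
    have hlen : j < (List.ofFn Ak).length := by simpa using h
    simp only [hxdef]
    rw [List.take_succ, List.getElem?_eq_getElem hlen]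
    simp [List.reverse_append, ← Matrix.mulVec_mulVec]
  have hxm : x m = μ • v := by
    have : (List.ofFn Ak).take m = List.ofFn Ak := by
      apply List.take_of_length_le; simp
    simp only [hxdef, this]
    exact hPv
  have hxm0 : x m ≠ 0 := by
    rw [hxm]; exact smul_ne_zero hμ0 hv0
  have hnz : ∀ j, j ≤ m → x j ≠ 0 := by
    intro j hj hxj
    apply hxm0
    have key : ∀ d, j + d ≤ m → x (j + d) = 0 := by
      intro d
      induction d with
      | zero => intro _; simpa using hxj
      | succ d ih =>
        intro hd
        have h1 : j + d < m := by omega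
        have : j + (d + 1) = (j + d) + 1 := by omega
        rw [this, hstep (j + d) h1, ih (by omega), Matrix.mulVec_zero]
    have := key (m - j) (by omega)
    rwa [show j + (m - j) = m by omega] at this
  -- phases and radii as functions on ℕ
  set γ' : ℕ → ℝ := fun j => if h : j < m then γ ⟨j, h⟩ else 0 with hγ'def
  set ρ : ℕ → ℝ := fun j =>
    if h : j < m then singAngle (Complex.exp (-(γ ⟨j, h⟩ : ℂ) * Complex.I) • Ak ⟨j, h⟩) else 0
    with hρdef
  set s : ℕ → ℝ := fun j => ∑ i ∈ Finset.range j, γ' i with hsdef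
  set R : ℝ := ∑ i ∈ Finset.range m, ρ i with hRdef
  have hsm : s m = ∑ k : Fin m, γ k := by
    have h := Fin.sum_univ_eq_sum_range γ' m
    rw [hsdef]
    show (∑ i ∈ Finset.range m, γ' i) = _
    rw [← h]
    exact Finset.sum_congr rfl fun k _ => by simp [hγ'def, k.isLt]
  have hRm : R = ∑ k : Fin m, singAngle (Complex.exp (-(γ k : ℂ) * Complex.I) • Ak k) := by
    have h := Fin.sum_univ_eq_sum_range ρ m
    rw [hRdef, ← h]
    exact Finset.sum_congr rfl fun k _ => by simp [hρdef, k.isLt]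
  -- rotated chain
  set w : ℕ → (Fin n → ℂ) := fun j => Complex.exp (-(s j : ℂ) * Complex.I) • x j with hwdef
  have hw0 : ∀ j, j ≤ m → w j ≠ 0 := fun j hj =>
    smul_ne_zero (Complex.exp_ne_zero _) (hnz j hj)
  -- step angle bound
  have hstepangle : ∀ j, ∀ h : j < m,
      InnerProductGeometry.angle (toE (w j)) (toE (w (j + 1))) ≤ ρ j := by
    intro j h
    set k : Fin m := ⟨j, h⟩ with hk
    set M : Matrix (Fin n) (Fin n) ℂ := Complex.exp (-(γ k : ℂ) * Complex.I) • Ak k with hM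
    have hx1 : x (j + 1) = (Ak k).mulVec (x j) := hstep j h
    have hMx : M.mulVec (x j) = Complex.exp (-(γ k : ℂ) * Complex.I) • x (j + 1) := by
      rw [hM, Matrix.smul_mulVec, hx1]
    have hMx0 : M.mulVec (x j) ≠ 0 := by
      rw [hMx]
      exact smul_ne_zero (Complex.exp_ne_zero _) (hnz (j + 1) (by omega))
    have hsj1 : s (j + 1) = s j + γ k := by
      rw [hsdef]
      simp only
      rw [Finset.sum_range_succ]
      congr 1
      simp [hγ'def, h, hk]
    -- the quadratic form identity
    have hqf : star (w j) ⬝ᵥ w (j + 1) = qform M (x j) := by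
      rw [hwdef]
      simp only [qform, hMx]
      rw [star_smul, smul_dotProduct, dotProduct_smul, dotProduct_smul,
        hx1, smul_smul]
      congr 1
      rw [Complex.star_def, ← Complex.exp_conj, ← Complex.exp_add]
      congr 1
      have hc : (starRingEnd ℂ) (-(s j : ℂ) * Complex.I) = (s j : ℂ) * Complex.I := by
        simp [Complex.conj_ofReal]
      rw [hc]
      have hcast : (s (j + 1) : ℂ) = (s j : ℂ) + (γ k : ℂ) := by
        rw [hsj1]; push_cast; ring
      rw [hcast]
      ring
    have hnorm1 : evnorm (w j) = evnorm (x j) := by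
      rw [hwdef]
      exact evnorm_smul_unit (by simp [Complex.norm_exp]) _
    have hnorm2 : evnorm (w (j + 1)) = evnorm (M.mulVec (x j)) := by
      rw [hwdef, hMx]
      simp only
      rw [evnorm_smul_unit (by simp [Complex.norm_exp]) _,
        evnorm_smul_unit (by simp [Complex.norm_exp]) _]
    have hangle : InnerProductGeometry.angle (toE (w j)) (toE (w (j + 1))) =
        Real.arccos ((qform M (x j)).re / (evnorm (x j) * evnorm (M.mulVec (x j)))) := by
      rw [angle_toE, hqf, hnorm1, hnorm2]
    rw [hangle]
    have hmem : Real.arccos ((qform M (x j)).re / (evnorm (x j) * evnorm (M.mulVec (x j)))) ∈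
        {θ : ℝ | ∃ y : Fin n → ℂ, y ≠ 0 ∧ M.mulVec y ≠ 0 ∧
          θ = Real.arccos ((qform M y).re / (evnorm y * evnorm (M.mulVec y)))} :=
      ⟨x j, hnz j (by omega), hMx0, rfl⟩
    have hbdd : BddAbove {θ : ℝ | ∃ y : Fin n → ℂ, y ≠ 0 ∧ M.mulVec y ≠ 0 ∧
        θ = Real.arccos ((qform M y).re / (evnorm y * evnorm (M.mulVec y)))} := by
      refine ⟨Real.pi, fun θ hθ => ?_⟩
      obtain ⟨y, -, -, rfl⟩ := hθ
      exact Real.arccos_le_pi _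
    have hle := le_csSup hbdd hmem
    have hρj : ρ j = singAngle M := by
      simp only [hρdef]
      rw [dif_pos h]
    rw [hρj]
    exact hle
  -- triangle chain
  have hchain : ∀ j, j ≤ m →
      InnerProductGeometry.angle (toE (w 0)) (toE (w j)) ≤ ∑ i ∈ Finset.range j, ρ i := by
    intro j
    induction j with
    | zero =>
      intro _
      rw [InnerProductGeometry.angle_self (toE_ne_zero (hw0 0 (by omega)))]
      simp
    | succ j ih =>
      intro hj
      have h1 : j < m := by omega
      have tri := angle_triangle_ne (toE (w 0)) (toE (w j)) (toE (w (j + 1)))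
        (toE_ne_zero (hw0 0 (by omega))) (toE_ne_zero (hw0 j (by omega)))
        (toE_ne_zero (hw0 (j + 1) (by omega)))
      have := hstepangle j h1
      rw [Finset.sum_range_succ]
      have := ih (by omega)
      linarith [hstepangle j h1]
  -- final computation
  set c : ℂ := Complex.exp (-(s m : ℂ) * Complex.I) * μ with hcdef
  have hc0 : c ≠ 0 := mul_ne_zero (Complex.exp_ne_zero _) hμ0
  have habsc : ‖c‖ = ‖μ‖ := by
    rw [hcdef, norm_mul, Complex.norm_exp]
    simp
  have hw00 : w 0 = v := by
    rw [hwdef]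
    simp only [hsdef]
    simp [hx0]
  have hwm : w m = c • v := by
    rw [hwdef]
    simp only [hxm, hcdef, smul_smul]
  -- the angle between v and c • v is |arg c|
  have hvn : evnorm v ≠ 0 := by
    rw [← toE_norm]
    exact norm_ne_zero_iff.mpr (toE_ne_zero hv0)
  have hvpos : 0 < evnorm v := lt_of_le_of_ne (Real.sqrt_nonneg _) (Ne.symm hvn)
  have hNre : (star v ⬝ᵥ v).re = evnorm v * evnorm v := by
    have h := toE_inner_re v v
    rw [real_inner_self_eq_norm_mul_norm, toE_norm] at h
    exact h.symm
  have hNim : (star v ⬝ᵥ v).im = 0 := by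
    simp [dotProduct, Complex.im_sum, mul_comm]
  have hfinal : InnerProductGeometry.angle (toE (w 0)) (toE (w m)) = |Complex.arg c| := by
    rw [hw00, hwm, angle_toE]
    have hdp : star v ⬝ᵥ (c • v) = c * (star v ⬝ᵥ v) := by
      rw [dotProduct_smul]; rfl
    rw [hdp]
    have hre : (c * (star v ⬝ᵥ v)).re = c.re * (evnorm v * evnorm v) := by
      rw [Complex.mul_re, hNre, hNim]
      ring
    rw [hre, evnorm_smul]
    have hratio : c.re * (evnorm v * evnorm v) /
        (evnorm v * (‖c‖ * evnorm v)) = c.re / ‖c‖ := by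
      have habs0 : ‖c‖ ≠ 0 := by
        simpa using hc0
      field_simp
    rw [hratio, ← Complex.cos_arg hc0]
    rcases le_or_gt 0 (Complex.arg c) with hpos | hneg
    · rw [abs_of_nonneg hpos]
      exact Real.arccos_cos hpos (Complex.arg_le_pi c)
    · rw [abs_of_neg hneg, ← Real.cos_neg]
      exact Real.arccos_cos (by linarith) (by linarith [Complex.neg_pi_lt_arg c])
  have hargle : |Complex.arg c| ≤ R := by
    rw [← hfinal, hRdef]
    exact hchain m le_rfl
  refine ⟨s m + Complex.arg c, ?_, ?_, ?_⟩
  · have habs : (‖c‖ : ℂ) * Complex.exp ((Complex.arg c : ℂ) * Complex.I) = c :=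
      Complex.norm_mul_exp_arg_mul_I c
    have hμc : μ = Complex.exp ((s m : ℂ) * Complex.I) * c := by
      rw [hcdef, ← mul_assoc, ← Complex.exp_add]
      have : (s m : ℂ) * Complex.I + -(s m : ℂ) * Complex.I = 0 := by ring
      rw [this, Complex.exp_zero, one_mul]
    conv_lhs => rw [hμc, ← habs]
    rw [← habsc,
      show ((s m + Complex.arg c : ℝ) : ℂ) * Complex.I
        = (s m : ℂ) * Complex.I + (Complex.arg c : ℂ) * Complex.I by push_cast; ring,
      Complex.exp_add]
    ring
  · have hsum : (∑ k, (γ k - singAngle (Complex.exp (-(γ k : ℂ) * Complex.I) • Ak k)))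
        = s m - R := by
      rw [hsm, hRm, Finset.sum_sub_distrib]
    rw [hsum]
    have := abs_le.mp hargle
    linarith [this.1]
  · have hsum : (∑ k, (γ k + singAngle (Complex.exp (-(γ k : ℂ) * Complex.I) • Ak k)))
        = s m + R := by
      rw [hsm, hRm, Finset.sum_add_distrib]
    rw [hsum]
    have := abs_le.mp hargle
    linarith [this.2]
end

section
/- If A ∈ C^{n×n} is positive definite (Hermitian with all eigenvalues positive), then its singular angle satisfies θ(A) = arccos( 2√κ / (κ + 1) ), where κ = λ_max(A)/λ_min(A) is the condition number of A. -/
open scoped Matrix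

open scoped ComplexOrder

namespace Aux11

open Matrix

lemma arccos_anti {x y : ℝ} (h : x ≤ y) : Real.arccos y ≤ Real.arccos x := by
  unfold Real.arccos
  have := Real.monotone_arcsin h
  linarith

lemma kantorovich {n : ℕ} {m M : ℝ} (hm : 0 < m) (hM : 0 < M) (lam t : Fin n → ℝ)
    (ht : ∀ i, 0 ≤ t i) (h1 : ∀ i, m ≤ lam i) (h2 : ∀ i, lam i ≤ M) :
    (∑ i, (lam i)^2 * t i) * (∑ i, t i) * (4 * m * M) ≤
      (m + M)^2 * (∑ i, lam i * t i)^2 := by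
  set P := ∑ i, (lam i)^2 * t i with hP'
  set T := ∑ i, t i with hT'
  set S := ∑ i, lam i * t i with hS'
  have hPT : P + m * M * T ≤ (m + M) * S := by
    have hpt : ∀ i ∈ Finset.univ, (lam i)^2 * t i + m * M * t i ≤ (m + M) * (lam i * t i) := by
      intro i _
      nlinarith [mul_nonneg (mul_nonneg (sub_nonneg.2 (h1 i)) (sub_nonneg.2 (h2 i))) (ht i)]
    calc P + m*M*T = ∑ i, ((lam i)^2 * t i + m*M* t i) := by
          rw [Finset.sum_add_distrib, Finset.mul_sum]
      _ ≤ ∑ i, (m+M)*(lam i * t i) := Finset.sum_le_sum hpt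
      _ = (m+M)*S := by rw [Finset.mul_sum]
  have hP : 0 ≤ P := Finset.sum_nonneg fun i _ => mul_nonneg (sq_nonneg _) (ht i)
  have hT : 0 ≤ T := Finset.sum_nonneg fun i _ => ht i
  nlinarith [sq_nonneg ((m+M)*S - 2*m*M*T), mul_nonneg (mul_nonneg hm.le hM.le) hT,
    mul_le_mul_of_nonneg_left hPT (mul_nonneg (mul_nonneg hm.le hM.le) hT)]

lemma re_dot_self {n : ℕ} (z : Fin n → ℂ) :
    (star z ⬝ᵥ z).re = ∑ i, Complex.normSq (z i) := by
  rw [dotProduct, Complex.re_sum]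
  refine Finset.sum_congr rfl fun i _ => ?_
  simp [Complex.normSq_apply, Complex.mul_re]

lemma re_dot_diag {n : ℕ} (lam : Fin n → ℝ) (y : Fin n → ℂ) :
    (star y ⬝ᵥ (Matrix.diagonal (fun i => (lam i : ℂ)) *ᵥ y)).re
      = ∑ i, lam i * Complex.normSq (y i) := by
  rw [dotProduct, Complex.re_sum]
  refine Finset.sum_congr rfl fun i _ => ?_
  simp [Matrix.mulVec_diagonal, Complex.normSq_apply, Complex.mul_re, Complex.mul_im]
  ring

lemma dotU {n : ℕ} {U : Matrix (Fin n) (Fin n) ℂ} (hU : U ∈ Matrix.unitaryGroup (Fin n) ℂ)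
    (y z : Fin n → ℂ) : star (U *ᵥ y) ⬝ᵥ (U *ᵥ z) = star y ⬝ᵥ z := by
  rw [Matrix.star_mulVec, ← Matrix.dotProduct_mulVec, Matrix.mulVec_mulVec,
    ← Matrix.star_eq_conjTranspose, Unitary.coe_star_mul_self ⟨U, hU⟩, Matrix.one_mulVec]

end Aux11


theorem stmt11 {n : ℕ} (hn : 0 < n) (A : Matrix (Fin n) (Fin n) ℂ) (hA : A.PosDef) :
    singAngle A =
      Real.arccos (2 * Real.sqrt ((⨆ i, hA.1.eigenvalues i) / (⨅ i, hA.1.eigenvalues i)) /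
        ((⨆ i, hA.1.eigenvalues i) / (⨅ i, hA.1.eigenvalues i) + 1)) := by
  classical
  haveI : Nonempty (Fin n) := ⟨⟨0, hn⟩⟩
  set lam := hA.1.eigenvalues with hlam
  obtain ⟨imax, hmax⟩ := Finite.exists_max lam
  obtain ⟨imin, hmin⟩ := Finite.exists_min lam
  set m := lam imin with hmdef
  set M := lam imax with hMdef
  have hm : 0 < m := hA.eigenvalues_pos imin
  have hM : 0 < M := hA.eigenvalues_pos imax
  have hMsup : (⨆ i, lam i) = M :=
    le_antisymm (ciSup_le hmax) (le_ciSup (Set.Finite.bddAbove (Set.finite_range lam)) imax)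
  have hminf : (⨅ i, lam i) = m :=
    le_antisymm (ciInf_le (Set.Finite.bddBelow (Set.finite_range lam)) imin) (le_ciInf hmin)
  rw [hMsup, hminf]
  set c := 2 * Real.sqrt (m * M) / (m + M) with hc
  have hkey : 2 * Real.sqrt (M / m) / (M / m + 1) = c := by
    rw [hc, Real.sqrt_div hM.le, Real.sqrt_mul hm.le]
    have h1 : Real.sqrt m > 0 := Real.sqrt_pos.2 hm
    have h2 : Real.sqrt m * Real.sqrt m = m := Real.mul_self_sqrt hm.le
    field_simp
    linear_combination (-(m + M)) * h2
  rw [hkey]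
  -- unitary setup
  set U : Matrix (Fin n) (Fin n) ℂ :=
    (Matrix.IsHermitian.eigenvectorUnitary hA.1 : Matrix (Fin n) (Fin n) ℂ) with hUdef
  have hUmem : U ∈ Matrix.unitaryGroup (Fin n) ℂ := (Matrix.IsHermitian.eigenvectorUnitary hA.1).2
  have hUU : U * star U = 1 := Matrix.mem_unitaryGroup_iff.mp hUmem
  have hUU' : star U * U = 1 := Matrix.mem_unitaryGroup_iff'.mp hUmem
  set D : Matrix (Fin n) (Fin n) ℂ := Matrix.diagonal (fun i => (lam i : ℂ)) with hDdef
  have hAU : ∀ y : Fin n → ℂ, A *ᵥ (U *ᵥ y) = U *ᵥ (D *ᵥ y) := by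
    intro y
    have hsp : A = U * D * star U := by
      have := hA.1.spectral_theorem
      rw [Unitary.conjStarAlgAut_apply] at this
      exact this
    rw [hsp, Matrix.mulVec_mulVec, Matrix.mulVec_mulVec, Matrix.mul_assoc (U * D),
      hUU', Matrix.mul_one]
  have hAxne : ∀ x : Fin n → ℂ, x ≠ 0 → A *ᵥ x ≠ 0 := by
    intro x hx h
    have h2 := hA.dotProduct_mulVec_pos hx
    rw [h, dotProduct_zero] at h2
    exact lt_irrefl 0 h2
  set SS := {θ : ℝ | ∃ x : Fin n → ℂ, x ≠ 0 ∧ A.mulVec x ≠ 0 ∧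
    θ = Real.arccos ((qform A x).re / (evnorm x * evnorm (A.mulVec x)))} with hSS
  -- upper bound
  have hub : ∀ θ ∈ SS, θ ≤ Real.arccos c := by
    rintro θ ⟨x, hx0, hAx0, rfl⟩
    have hy0 : star U *ᵥ x ≠ 0 := by
      intro hy
      apply hx0
      have : U *ᵥ (star U *ᵥ x) = x := by
        rw [Matrix.mulVec_mulVec, hUU, Matrix.one_mulVec]
      rw [hy, Matrix.mulVec_zero] at this
      exact this.symm
    set y := star U *ᵥ x with hydef
    have hxy : x = U *ᵥ y := by
      rw [hydef, Matrix.mulVec_mulVec, hUU, Matrix.one_mulVec]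
    set t : Fin n → ℝ := fun i => Complex.normSq (y i) with htdef
    set T := ∑ i, t i with hTdef
    set S := ∑ i, lam i * t i with hSdef2
    set P := ∑ i, (lam i)^2 * t i with hPdef
    have hTx : (star x ⬝ᵥ x).re = T := by
      rw [hxy, Aux11.dotU hUmem, Aux11.re_dot_self]
    have hSx : (qform A x).re = S := by
      rw [qform, hxy, hAU, Aux11.dotU hUmem, hDdef, Aux11.re_dot_diag]
    have hPx : (star (A *ᵥ x) ⬝ᵥ (A *ᵥ x)).re = P := by
      rw [hxy, hAU, Aux11.dotU hUmem, Aux11.re_dot_self]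
      refine Finset.sum_congr rfl fun i _ => ?_
      rw [hDdef, Matrix.mulVec_diagonal, Complex.normSq_mul, Complex.normSq_ofReal]
      ring
    have hT : 0 < T := by
      obtain ⟨i, hi⟩ := Function.ne_iff.1 hy0
      exact Finset.sum_pos' (fun j _ => Complex.normSq_nonneg _)
        ⟨i, Finset.mem_univ i, Complex.normSq_pos.2 hi⟩
    have hP : 0 < P := by
      have hAx : (star (A *ᵥ x) ⬝ᵥ (A *ᵥ x)).re > 0 := by
        rw [Aux11.re_dot_self]
        obtain ⟨i, hi⟩ := Function.ne_iff.1 hAx0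
        exact Finset.sum_pos' (fun j _ => Complex.normSq_nonneg _)
          ⟨i, Finset.mem_univ i, Complex.normSq_pos.2 hi⟩
      rwa [hPx] at hAx
    have hS : 0 ≤ S := Finset.sum_nonneg fun i _ =>
      mul_nonneg (hm.le.trans (hmin i)) (Complex.normSq_nonneg _)
    have hk := Aux11.kantorovich hm hM lam t (fun i => Complex.normSq_nonneg _) hmin hmax
    have e1 : evnorm x = Real.sqrt T := by rw [evnorm, hTx]
    have e2 : evnorm (A *ᵥ x) = Real.sqrt P := by rw [evnorm, hPx]
    rw [e1, e2, hSx]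
    apply Aux11.arccos_anti
    rw [hc, div_le_div_iff₀ (by positivity) (by positivity)]
    have l1 : Real.sqrt (P * T * (4 * m * M)) = Real.sqrt P * Real.sqrt T * (2 * Real.sqrt (m * M)) := by
      rw [Real.sqrt_mul (by positivity), Real.sqrt_mul hP.le,
        show (4:ℝ) * m * M = 2^2 * (m*M) by ring, Real.sqrt_mul (by positivity),
        Real.sqrt_sq (by norm_num)]
    have l2 : Real.sqrt ((m + M)^2 * S^2) = (m + M) * S := by
      rw [Real.sqrt_mul (sq_nonneg _), Real.sqrt_sq (by positivity), Real.sqrt_sq hS]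
    have hsq := Real.sqrt_le_sqrt hk
    rw [l1, l2] at hsq
    calc 2 * Real.sqrt (m * M) * (Real.sqrt T * Real.sqrt P)
        = Real.sqrt P * Real.sqrt T * (2 * Real.sqrt (m * M)) := by ring
      _ ≤ (m + M) * S := hsq
      _ = S * (m + M) := by ring
  -- membership
  have hmem : Real.arccos c ∈ SS := by
    have hwit : ∀ y0 : Fin n → ℂ, y0 ≠ 0 →
        (∑ i, lam i * Complex.normSq (y0 i)) /
          (Real.sqrt (∑ i, Complex.normSq (y0 i)) *
           Real.sqrt (∑ i, (lam i)^2 * Complex.normSq (y0 i))) = c →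
        Real.arccos c ∈ SS := by
      intro y0 hy0ne hr
      set x := U *ᵥ y0 with hxdef
      have hx0 : x ≠ 0 := by
        intro h
        apply hy0ne
        have h2 : star U *ᵥ x = y0 := by
          rw [hxdef, Matrix.mulVec_mulVec, hUU', Matrix.one_mulVec]
        rw [h, Matrix.mulVec_zero] at h2
        exact h2.symm
      refine ⟨x, hx0, hAxne x hx0, ?_⟩
      have hTx : (star x ⬝ᵥ x).re = ∑ i, Complex.normSq (y0 i) := by
        rw [hxdef, Aux11.dotU hUmem, Aux11.re_dot_self]
      have hSx : (qform A x).re = ∑ i, lam i * Complex.normSq (y0 i) := by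
        rw [qform, hxdef, hAU, Aux11.dotU hUmem, hDdef, Aux11.re_dot_diag]
      have hPx : (star (A *ᵥ x) ⬝ᵥ (A *ᵥ x)).re = ∑ i, (lam i)^2 * Complex.normSq (y0 i) := by
        rw [hxdef, hAU, Aux11.dotU hUmem, Aux11.re_dot_self]
        refine Finset.sum_congr rfl fun i _ => ?_
        rw [hDdef, Matrix.mulVec_diagonal, Complex.normSq_mul, Complex.normSq_ofReal]
        ring
      show Real.arccos c = Real.arccos ((qform A x).re /
        (Real.sqrt ((star x ⬝ᵥ x).re) * Real.sqrt ((star (A *ᵥ x) ⬝ᵥ (A *ᵥ x)).re)))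
      rw [hTx, hSx, hPx, hr]
    by_cases hcase : imin = imax
    · -- all eigenvalues equal
      have hmM : m = M := by rw [hmdef, hMdef, hcase]
      set y1 : Fin n → ℂ := fun i => if i = imin then 1 else 0 with hy1def
      refine hwit y1 ?_ ?_
      · intro h
        have h2 := congrFun h imin
        simp [hy1def] at h2
      · have hns : ∀ i, Complex.normSq (y1 i) = if i = imin then 1 else 0 := by
          intro i
          by_cases h1 : i = imin <;> simp [hy1def, h1]
        have h1 : (∑ i, Complex.normSq (y1 i)) = 1 := by
          simp [hns]
        have h2 : (∑ i, lam i * Complex.normSq (y1 i)) = m := by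
          simp [hns, Finset.sum_ite_eq', ← hmdef]
        have h3 : (∑ i, (lam i)^2 * Complex.normSq (y1 i)) = m^2 := by
          simp [hns, Finset.sum_ite_eq', ← hmdef]
        rw [h1, h2, h3, Real.sqrt_one, Real.sqrt_sq hm.le, hc, ← hmM,
          Real.sqrt_mul_self hm.le]
        field_simp
        ring
    · -- two distinct extremal eigenvectors
      set y0 : Fin n → ℂ := fun i =>
        if i = imin then ((Real.sqrt M : ℝ) : ℂ) else if i = imax then ((Real.sqrt m : ℝ) : ℂ) else 0
        with hy0def
      have hns : ∀ i, Complex.normSq (y0 i) = if i = imin then M else if i = imax then m else 0 := by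
        intro i
        by_cases h1 : i = imin <;> by_cases h2 : i = imax <;>
          simp [hy0def, h1, h2, Ne.symm hcase, Complex.normSq_ofReal,
            Real.mul_self_sqrt hm.le, Real.mul_self_sqrt hM.le]
      have hpair : ∀ g : Fin n → ℝ, (∀ i, i ≠ imin → i ≠ imax → g i = 0) →
          ∑ i, g i = g imin + g imax := by
        intro g hg
        rw [← Finset.sum_subset (Finset.subset_univ ({imin, imax} : Finset (Fin n)))
            (fun i _ hi => hg i (fun h => hi (by simp [h])) (fun h => hi (by simp [h])))]
        exact Finset.sum_pair hcase
      refine hwit y0 ?_ ?_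
      · intro h
        have h2 := congrFun h imin
        simp [hy0def] at h2
        exact (Real.sqrt_pos.2 hM).ne' h2
      · have h1 : (∑ i, Complex.normSq (y0 i)) = M + m := by
          rw [hpair _ (fun i e1 e2 => by rw [hns i]; simp [e1, e2])]
          rw [hns, hns]
          simp [hcase, Ne.symm hcase]
        have h2 : (∑ i, lam i * Complex.normSq (y0 i)) = m * M + M * m := by
          rw [hpair _ (fun i e1 e2 => by rw [hns i]; simp [e1, e2])]
          rw [hns, hns]
          simp [hcase, Ne.symm hcase, ← hmdef, ← hMdef]
        have h3 : (∑ i, (lam i)^2 * Complex.normSq (y0 i)) = m^2 * M + M^2 * m := by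
          rw [hpair _ (fun i e1 e2 => by rw [hns i]; simp [e1, e2])]
          rw [hns, hns]
          simp [hcase, Ne.symm hcase, ← hmdef, ← hMdef]
        rw [h1, h2, h3]
        have hsmm : Real.sqrt (m*M) * Real.sqrt (m*M) = m*M := Real.mul_self_sqrt (by positivity)
        have hden : Real.sqrt (M+m) * Real.sqrt (m^2*M + M^2*m) = (m+M) * Real.sqrt (m*M) := by
          rw [show m^2*M + M^2*m = (m*M)*(m+M) by ring, Real.sqrt_mul (by positivity),
            show M+m = m+M by ring]
          calc Real.sqrt (m+M) * (Real.sqrt (m*M) * Real.sqrt (m+M))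
              = (Real.sqrt (m+M) * Real.sqrt (m+M)) * Real.sqrt (m*M) := by ring
            _ = (m+M) * Real.sqrt (m*M) := by rw [Real.mul_self_sqrt (by positivity)]
        rw [hden, hc, div_eq_div_iff (by positivity) (by positivity)]
        linear_combination (-2*(m+M)) * hsmm
  exact le_antisymm (csSup_le ⟨_, hmem⟩ hub) (le_csSup ⟨_, hub⟩ hmem)
end
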